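/- Let φ be a three-dimensional nilpotent complex Jordan algebra with a basis {e₁,e₂,e₃} satisfying φ(e₁,e₁) = e₂ and φ(e₁,e₂) = e₃. Then φ(e₂,e₂) = 0 and e₃ lies in the center, i.e., φ(e₃,y) = 0 for all y. -/

import Mathlib

/-- Bilinearity of a plain product. -/
def IsBilin (K : Type*) [Field K] {V : Type*} [AddCommGroup V] [Module K V]
    (φ : V → V → V) : Prop :=
  (∀ (a : K) (x y z : V), φ (a • x + y) z = a • φ x z + φ y z) ∧
  (∀ (a : K) (x y z : V), φ x (a • y + z) = a • φ x y + φ x z)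

/-- Commutativity (symmetry) of the product. -/
def IsComm {V : Type*} (φ : V → V → V) : Prop := ∀ x y, φ x y = φ y x

/-- The Jordan identity. -/
def JordanId {V : Type*} (φ : V → V → V) : Prop :=
  ∀ x y, φ (φ x x) (φ x y) = φ x (φ (φ x x) y)

/-- Lower central series: `lcs K φ 0 = C¹ = V`, and `lcs K φ m` is the term `C^{m+1}`. -/
def lcs (K : Type*) [Field K] {V : Type*} [AddCommGroup V] [Module K V]
    (φ : V → V → V) : ℕ → Submodule K V
  | 0 => ⊤
  | m + 1 => Submodule.span K {z | ∃ x ∈ lcs K φ m, ∃ y, z = φ x y}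

/-- Nilpotency: some term of the lower central series vanishes. -/
def IsNilp (K : Type*) [Field K] {V : Type*} [AddCommGroup V] [Module K V]
    (φ : V → V → V) : Prop := ∃ k, lcs K φ k = ⊥

section Aux

variable {K : Type*} [Field K] {V : Type*} [AddCommGroup V] [Module K V] (φ : V → V → V)

lemma mem_lcs_succ {x : V} {m : ℕ} (hx : x ∈ lcs K φ m) (y : V) :
    φ x y ∈ lcs K φ (m + 1) :=
  Submodule.subset_span ⟨x, hx, y, rfl⟩

lemma lcs_succ_le : ∀ m, lcs K φ (m + 1) ≤ lcs K φ m := by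
  intro m
  induction m with
  | zero => exact le_top
  | succ n ih =>
    show Submodule.span K {z | ∃ x ∈ lcs K φ (n+1), ∃ y, z = φ x y} ≤ lcs K φ (n+1)
    apply Submodule.span_le.2
    rintro z ⟨x, hx, y, rfl⟩
    exact mem_lcs_succ φ (ih hx) y

lemma lcs_antitone : Antitone (lcs K φ) :=
  antitone_nat_of_succ_le (lcs_succ_le φ)

lemma lcs_eq_of_succ_eq {n : ℕ} (h : lcs K φ (n + 1) = lcs K φ n) :
    ∀ j, lcs K φ (n + j) = lcs K φ n := by
  intro j
  induction j with
  | zero => rfl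
  | succ m ih =>
    show Submodule.span K {z | ∃ x ∈ lcs K φ (n + m), ∃ y, z = φ x y} = lcs K φ n
    rw [ih]
    exact h

lemma lcs_lt_of_ne_bot (hnilp : IsNilp K φ) {n : ℕ} (hn : lcs K φ n ≠ ⊥) :
    lcs K φ (n + 1) < lcs K φ n := by
  rcases lt_or_eq_of_le (lcs_succ_le (K := K) φ n) with h | h
  · exact h
  · exfalso
    obtain ⟨k, hk⟩ := hnilp
    rcases le_total k n with hkn | hkn
    · exact hn (le_bot_iff.1 (hk ▸ lcs_antitone φ hkn))
    · have := lcs_eq_of_succ_eq φ h (k - n)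
      rw [Nat.add_sub_cancel' hkn, hk] at this
      exact hn this.symm

end Aux

/-- in a 3-dimensional nilpotent complex Jordan algebra with
φ(e₁,e₁)=e₂ and φ(e₁,e₂)=e₃, one has φ(e₂,e₂)=0 and e₃ is central. -/
theorem dim_three_max_char_seq_structure
    {V : Type*} [AddCommGroup V] [Module ℂ V] (φ : V → V → V)
    (hbil : IsBilin ℂ φ) (hcomm : IsComm φ) (hjord : JordanId φ)
    (hnilp : IsNilp ℂ φ) (e : Module.Basis (Fin 3) ℂ V)
    (h11 : φ (e 0) (e 0) = e 1) (h12 : φ (e 0) (e 1) = e 2) :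
    φ (e 1) (e 1) = 0 ∧ ∀ y : V, φ (e 2) y = 0 := by
  haveI : Nontrivial V := nontrivial_of_ne (e 0) 0 (e.ne_zero 0)
  haveI : FiniteDimensional ℂ V := Module.Finite.of_basis e
  have he1 : e 1 ∈ lcs ℂ φ 1 :=
    Submodule.subset_span ⟨e 0, Submodule.mem_top, e 0, h11.symm⟩
  have he2 : e 2 ∈ lcs ℂ φ 2 :=
    Submodule.subset_span ⟨e 1, he1, e 0, by rw [hcomm (e 1) (e 0), h12]⟩
  have l0 : lcs ℂ φ 1 < lcs ℂ φ 0 := by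
    apply lcs_lt_of_ne_bot φ hnilp
    show (⊤ : Submodule ℂ V) ≠ ⊥
    exact bot_lt_top.ne'
  have l1 : lcs ℂ φ 2 < lcs ℂ φ 1 := by
    apply lcs_lt_of_ne_bot φ hnilp
    intro h
    exact e.ne_zero 1 ((Submodule.mem_bot ℂ).1 (h ▸ he1))
  have l2 : lcs ℂ φ 3 < lcs ℂ φ 2 := by
    apply lcs_lt_of_ne_bot φ hnilp
    intro h
    exact e.ne_zero 2 ((Submodule.mem_bot ℂ).1 (h ▸ he2))
  have f0 : Module.finrank ℂ (lcs ℂ φ 0) = 3 := by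
    show Module.finrank ℂ (⊤ : Submodule ℂ V) = 3
    rw [finrank_top, Module.finrank_eq_card_basis e, Fintype.card_fin]
  have g0 := Submodule.finrank_lt_finrank_of_lt l0
  have g1 := Submodule.finrank_lt_finrank_of_lt l1
  have g2 := Submodule.finrank_lt_finrank_of_lt l2
  rw [f0] at g0
  have f3 : Module.finrank ℂ (lcs ℂ φ 3) = 0 := by omega
  have hbot : lcs ℂ φ 3 = ⊥ := Submodule.finrank_eq_zero.1 f3
  have hcent : ∀ y : V, φ (e 2) y = 0 := by
    intro y
    have := mem_lcs_succ φ he2 y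
    rw [hbot] at this
    exact (Submodule.mem_bot ℂ).1 this
  refine ⟨?_, hcent⟩
  have hj := hjord (e 0) (e 0)
  rw [h11] at hj
  rw [hj, hcomm (e 1) (e 0), h12, hcomm (e 0) (e 2), hcent (e 0)]
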